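/- Let u ∈ ℂ^d, let κ ∈ G, let v¹, v², v³ ∈ ℂ^d and δ¹, δ², δ³ ∈ 𝔤, and set Δ^j = κ★(Ξ_u δ^j)★κ⁻¹ − (ξ_{v^j} κ)★κ⁻¹ for j = 1,2,3 (κ⁻¹ being the ★-inverse of κ). Then [(v¹,Δ¹),(v²,Δ²)] = (v³,Δ³) if and only if [(v¹,δ¹),(v²,δ²)] = (v³,δ³). -/
import Mathlib


open scoped BigOperators

/-- Convolution product on `ℂ^W`: `(δ★δ′)_w = Σ_{w=w₁w₂} δ_{w₁} δ′_{w₂}`. -/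
noncomputable def conv {A : Type*} (x y : List A → ℂ) : List A → ℂ :=
  fun w => ∑ i ∈ Finset.range (w.length + 1), x (w.take i) * y (w.drop i)

/-- Shuffle product of two words, as a multiset of words. -/
def shuffle {A : Type*} : List A → List A → Multiset (List A)
  | [], w => {w}
  | w, [] => {w}
  | a :: u, b :: v =>
      ((shuffle u (b :: v)).map (a :: ·)) + ((shuffle (a :: u) v).map (b :: ·))

/-- Membership in the group `G`: the shuffle relations with `γ_∅ = 1`. -/
def isGrp {A : Type*} (γ : List A → ℂ) : Prop :=
  γ [] = 1 ∧ ∀ w w' : List A, γ w * γ w' = ((shuffle w w').map γ).sum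

/-- Membership in the Lie algebra `𝔤`. -/
def isLie {A : Type*} (β : List A → ℂ) : Prop :=
  β [] = 0 ∧ ∀ w w' : List A, w ≠ [] → w' ≠ [] → ((shuffle w w').map β).sum = 0

/-- The unit `1` of the convolution product. -/
def unitCW {A : Type*} : List A → ℂ := fun w => match w with | [] => 1 | _ => 0

/-- `ν^v_ℓ = Σ_j v_j ν_{j,ℓ}` for a letter `ℓ`. -/
noncomputable def nuL {A : Type*} {d : ℕ} (ν : Fin d → A → ℂ) (v : Fin d → ℂ) (ℓ : A) : ℂ :=
  ∑ j, v j * ν j ℓ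

/-- `ν^v_w = ν^v_{ℓ₁} + ⋯ + ν^v_{ℓ_n}` for a word `w = ℓ₁⋯ℓ_n`. -/
noncomputable def nuW {A : Type*} {d : ℕ} (ν : Fin d → A → ℂ) (v : Fin d → ℂ) (w : List A) : ℂ :=
  (w.map (nuL ν v)).sum

/-- The operator `Ξ_v`: `(Ξ_v δ)_w = exp(ν^v_w) δ_w`. -/
noncomputable def XiOp {A : Type*} {d : ℕ} (ν : Fin d → A → ℂ) (v : Fin d → ℂ)
    (δ : List A → ℂ) : List A → ℂ :=
  fun w => Complex.exp (nuW ν v w) * δ w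

/-- The operator `ξ_v`: `(ξ_v δ)_w = ν^v_w δ_w`. -/
noncomputable def xiOp {A : Type*} {d : ℕ} (ν : Fin d → A → ℂ) (v : Fin d → ℂ)
    (δ : List A → ℂ) : List A → ℂ :=
  fun w => nuW ν v w * δ w

/-- The bracket `[(v,β),(u,η)] = (0, ξ_v η − ξ_u β + (β★η − η★β))` on `ℂ^d × ℂ^W`. -/
noncomputable def brkExt {A : Type*} {d : ℕ} (ν : Fin d → A → ℂ)
    (p q : (Fin d → ℂ) × (List A → ℂ)) : (Fin d → ℂ) × (List A → ℂ) :=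
  (0, xiOp ν p.1 q.2 - xiOp ν q.1 p.2 + (conv p.2 q.2 - conv q.2 p.2))

section Aux
variable {A : Type*}

lemma conv_nil (x y : List A → ℂ) : conv x y [] = x [] * y [] := by
  simp [conv]

lemma conv_cons (x y : List A → ℂ) (a : A) (w : List A) :
    conv x y (a :: w) = x [] * y (a :: w) + conv (fun t => x (a :: t)) y w := by
  show (∑ i ∈ Finset.range (w.length + 1 + 1), x ((a::w).take i) * y ((a::w).drop i)) = _
  rw [Finset.sum_range_succ']
  simp [conv, add_comm]

lemma conv_zero_left (x : List A → ℂ) : conv 0 x = 0 := by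
  funext w; simp [conv]

lemma conv_zero_right (x : List A → ℂ) : conv x 0 = 0 := by
  funext w; simp [conv]

lemma conv_add_left (x y z : List A → ℂ) : conv (x + y) z = conv x z + conv y z := by
  funext w; simp [conv, add_mul, Finset.sum_add_distrib]

lemma conv_add_right (x y z : List A → ℂ) : conv x (y + z) = conv x y + conv x z := by
  funext w; simp [conv, mul_add, Finset.sum_add_distrib]

lemma conv_one_left (x : List A → ℂ) : conv unitCW x = x := by
  funext w
  cases w with
  | nil => simp [conv_nil, unitCW]
  | cons a w =>
      rw [conv_cons]
      have : (fun t => (unitCW : List A → ℂ) (a :: t)) = 0 := by funext t; rfl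
      rw [this, conv_zero_left]
      simp [unitCW]

lemma conv_one_right (x : List A → ℂ) : conv x unitCW = x := by
  funext w
  induction w generalizing x with
  | nil => simp [conv_nil, unitCW]
  | cons a w ih =>
      rw [conv_cons, ih]
      simp [unitCW]

lemma conv_assoc (x y z : List A → ℂ) : conv (conv x y) z = conv x (conv y z) := by
  funext w
  induction w generalizing x with
  | nil => simp [conv]; ring
  | cons a w ih =>
      rw [conv_cons, conv_cons, conv_cons, conv_nil]
      have h1 : (fun t => conv x y (a::t))
          = fun t => x [] * (fun s => y (a::s)) t + conv (fun s => x (a::s)) y t := by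
        funext t; rw [conv_cons]
      rw [h1]
      have h2 : conv (fun t => x [] * (fun s => y (a::s)) t + conv (fun s => x (a::s)) y t) z w
          = x [] * conv (fun s => y (a::s)) z w + conv (conv (fun s => x (a::s)) y) z w := by
        simp [conv, add_mul, Finset.sum_add_distrib, Finset.mul_sum, mul_assoc]
      rw [h2, ih (fun s => x (a::s))]
      ring

end Aux

/-- Type synonym for `List A → ℂ` carrying the convolution ring structure. -/
def CW (A : Type*) : Type _ := List A → ℂ

noncomputable instance CW.addCommGroup {A : Type*} : AddCommGroup (CW A) :=
  inferInstanceAs (AddCommGroup (List A → ℂ))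

noncomputable instance CW.ring {A : Type*} : Ring (CW A) :=
  { CW.addCommGroup with
    mul := conv
    one := unitCW
    mul_assoc := conv_assoc
    one_mul := conv_one_left
    mul_one := conv_one_right
    left_distrib := conv_add_right
    right_distrib := fun a b c => conv_add_left a b c
    zero_mul := conv_zero_left
    mul_zero := conv_zero_right }

def CW.of {A : Type*} (f : List A → ℂ) : CW A := f

section Ops
variable {A : Type*} {d : ℕ} (ν : Fin d → A → ℂ)

lemma nuW_nil (v : Fin d → ℂ) : nuW ν v ([] : List A) = 0 := by simp [nuW]

lemma nuW_take_drop (v : Fin d → ℂ) (w : List A) (i : ℕ) :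
    nuW ν v (w.take i) + nuW ν v (w.drop i) = nuW ν v w := by
  conv_rhs => rw [← List.take_append_drop i w]
  simp [nuW]

lemma nuW_zero (w : List A) : nuW ν (0 : Fin d → ℂ) w = 0 := by
  induction w with
  | nil => simp [nuW]
  | cons a w ih => simp [nuW, nuL] at ih ⊢; exact ih

lemma xi_zero (x : List A → ℂ) : xiOp ν (0 : Fin d → ℂ) x = 0 := by
  funext w; simp [xiOp, nuW_zero]

lemma xi_one (v : Fin d → ℂ) : CW.of (xiOp ν v (1 : CW A)) = 0 := by
  funext w
  show nuW ν v w * unitCW w = 0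
  cases w with
  | nil => simp [nuW_nil]
  | cons a w => simp [unitCW]

lemma xi_sub (v : Fin d → ℂ) (x y : CW A) :
    CW.of (xiOp ν v (x - y)) = CW.of (xiOp ν v x) - CW.of (xiOp ν v y) := by
  funext w
  show nuW ν v w * (x w - y w) = nuW ν v w * x w - nuW ν v w * y w
  ring

lemma xi_mul (v : Fin d → ℂ) (x y : CW A) :
    CW.of (xiOp ν v (x * y)) = CW.of (xiOp ν v x) * y + x * CW.of (xiOp ν v y) := by
  funext w
  show nuW ν v w * conv x y w = conv (xiOp ν v x) y w + conv x (xiOp ν v y) w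
  simp only [conv, xiOp, Finset.mul_sum, ← Finset.sum_add_distrib]
  refine Finset.sum_congr rfl fun i _ => ?_
  rw [← nuW_take_drop ν v w i]
  ring

lemma xi_comm (v v' : Fin d → ℂ) (x : List A → ℂ) :
    xiOp ν v (xiOp ν v' x) = xiOp ν v' (xiOp ν v x) := by
  funext w; show nuW ν v w * (nuW ν v' w * x w) = nuW ν v' w * (nuW ν v w * x w); ring

lemma Xi_sub (v : Fin d → ℂ) (x y : CW A) :
    CW.of (XiOp ν v (x - y)) = CW.of (XiOp ν v x) - CW.of (XiOp ν v y) := by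
  funext w
  show Complex.exp (nuW ν v w) * (x w - y w) = _ * x w - _ * y w
  ring

lemma Xi_add (v : Fin d → ℂ) (x y : CW A) :
    CW.of (XiOp ν v (x + y)) = CW.of (XiOp ν v x) + CW.of (XiOp ν v y) := by
  funext w
  show Complex.exp (nuW ν v w) * (x w + y w) = _ * x w + _ * y w
  ring

lemma Xi_mul (v : Fin d → ℂ) (x y : CW A) :
    CW.of (XiOp ν v (x * y)) = CW.of (XiOp ν v x) * CW.of (XiOp ν v y) := by
  funext w
  show Complex.exp (nuW ν v w) * conv x y w = conv (XiOp ν v x) (XiOp ν v y) w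
  simp only [conv, XiOp, Finset.mul_sum]
  refine Finset.sum_congr rfl fun i _ => ?_
  rw [← nuW_take_drop ν v w i, Complex.exp_add]
  ring

lemma Xi_xi (v v' : Fin d → ℂ) (x : List A → ℂ) :
    XiOp ν v (xiOp ν v' x) = xiOp ν v' (XiOp ν v x) := by
  funext w
  show Complex.exp (nuW ν v w) * (nuW ν v' w * x w) = nuW ν v' w * (Complex.exp (nuW ν v w) * x w)
  ring

lemma Xi_inj (v : Fin d → ℂ) (x y : List A → ℂ) (h : XiOp ν v x = XiOp ν v y) : x = y := by
  funext w
  have h' := congrFun h w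
  exact mul_left_cancel₀ (Complex.exp_ne_zero _) h'

end Ops

lemma d_inv {R : Type*} [Ring R] (K Ki : R) (hKi : K * Ki = 1) (hiK : Ki * K = 1)
    (D : R → R) (hD : ∀ x y, D (x * y) = D x * y + x * D y) (h1 : D 1 = 0) :
    D Ki = -(Ki * D K * Ki) := by
  have h : D K * Ki + K * D Ki = 0 := by rw [← hD, hKi, h1]
  have h2 : K * D Ki = -(D K * Ki) := by
    have := eq_neg_of_add_eq_zero_right h
    linear_combination (norm := noncomm_ring) this
  calc D Ki = (Ki * K) * D Ki := by rw [hiK, one_mul]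
    _ = Ki * (K * D Ki) := by rw [mul_assoc]
    _ = Ki * (-(D K * Ki)) := by rw [h2]
    _ = -(Ki * D K * Ki) := by noncomm_ring

lemma key {R : Type*} [Ring R] (K Ki e₁ e₂ g : R) (D₁ D₂ : R → R)
    (hKi : K * Ki = 1) (hiK : Ki * K = 1)
    (hD₁ : ∀ x y, D₁ (x * y) = D₁ x * y + x * D₁ y)
    (hD₂ : ∀ x y, D₂ (x * y) = D₂ x * y + x * D₂ y)
    (hD₁s : ∀ x y, D₁ (x - y) = D₁ x - D₁ y)
    (hD₂s : ∀ x y, D₂ (x - y) = D₂ x - D₂ y)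
    (hD₁Ki : D₁ Ki = -(Ki * D₁ K * Ki)) (hD₂Ki : D₂ Ki = -(Ki * D₂ K * Ki))
    (hg₁ : D₁ (D₂ K) = g) (hg₂ : D₂ (D₁ K) = g) :
    D₁ (K * e₂ * Ki - D₂ K * Ki) - D₂ (K * e₁ * Ki - D₁ K * Ki)
      + ((K * e₁ * Ki - D₁ K * Ki) * (K * e₂ * Ki - D₂ K * Ki)
          - (K * e₂ * Ki - D₂ K * Ki) * (K * e₁ * Ki - D₁ K * Ki))
    = K * (D₁ e₂ - D₂ e₁ + (e₁ * e₂ - e₂ * e₁)) * Ki := by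
  have M1 : (K * e₁ * Ki) * (K * e₂ * Ki) = K * (e₁ * e₂) * Ki := by
    calc (K * e₁ * Ki) * (K * e₂ * Ki) = (K * e₁) * ((Ki * K) * (e₂ * Ki)) := by noncomm_ring
      _ = K * (e₁ * e₂) * Ki := by rw [hiK, one_mul]; noncomm_ring
  have M2 : (K * e₂ * Ki) * (K * e₁ * Ki) = K * (e₂ * e₁) * Ki := by
    calc (K * e₂ * Ki) * (K * e₁ * Ki) = (K * e₂) * ((Ki * K) * (e₁ * Ki)) := by noncomm_ring
      _ = K * (e₂ * e₁) * Ki := by rw [hiK, one_mul]; noncomm_ring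
  have M3 : (D₁ K * Ki) * (K * e₂ * Ki) = D₁ K * e₂ * Ki := by
    calc (D₁ K * Ki) * (K * e₂ * Ki) = D₁ K * ((Ki * K) * (e₂ * Ki)) := by noncomm_ring
      _ = D₁ K * e₂ * Ki := by rw [hiK, one_mul]; noncomm_ring
  have M4 : (D₂ K * Ki) * (K * e₁ * Ki) = D₂ K * e₁ * Ki := by
    calc (D₂ K * Ki) * (K * e₁ * Ki) = D₂ K * ((Ki * K) * (e₁ * Ki)) := by noncomm_ring
      _ = D₂ K * e₁ * Ki := by rw [hiK, one_mul]; noncomm_ring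
  have E1 : D₁ (K * e₂ * Ki)
      = D₁ K * e₂ * Ki + K * D₁ e₂ * Ki + (K * e₂) * (-(Ki * D₁ K * Ki)) := by
    rw [hD₁ (K * e₂) Ki, hD₁ K e₂, hD₁Ki]; noncomm_ring
  have E2 : D₁ (D₂ K * Ki) = g * Ki + D₂ K * (-(Ki * D₁ K * Ki)) := by
    rw [hD₁ (D₂ K) Ki, hD₁Ki, hg₁]
  have E3 : D₂ (K * e₁ * Ki)
      = D₂ K * e₁ * Ki + K * D₂ e₁ * Ki + (K * e₁) * (-(Ki * D₂ K * Ki)) := by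
    rw [hD₂ (K * e₁) Ki, hD₂ K e₁, hD₂Ki]; noncomm_ring
  have E4 : D₂ (D₁ K * Ki) = g * Ki + D₁ K * (-(Ki * D₂ K * Ki)) := by
    rw [hD₂ (D₁ K) Ki, hD₂Ki, hg₂]
  have Mbig : (K * e₁ * Ki - D₁ K * Ki) * (K * e₂ * Ki - D₂ K * Ki)
      - (K * e₂ * Ki - D₂ K * Ki) * (K * e₁ * Ki - D₁ K * Ki)
      = K * (e₁ * e₂) * Ki - (K * e₁ * Ki) * (D₂ K * Ki) - D₁ K * e₂ * Ki
          + (D₁ K * Ki) * (D₂ K * Ki)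
        - (K * (e₂ * e₁) * Ki - (K * e₂ * Ki) * (D₁ K * Ki) - D₂ K * e₁ * Ki
          + (D₂ K * Ki) * (D₁ K * Ki)) := by
    calc (K * e₁ * Ki - D₁ K * Ki) * (K * e₂ * Ki - D₂ K * Ki)
          - (K * e₂ * Ki - D₂ K * Ki) * (K * e₁ * Ki - D₁ K * Ki)
        = (K * e₁ * Ki) * (K * e₂ * Ki) - (K * e₁ * Ki) * (D₂ K * Ki)
            - (D₁ K * Ki) * (K * e₂ * Ki) + (D₁ K * Ki) * (D₂ K * Ki)
          - ((K * e₂ * Ki) * (K * e₁ * Ki) - (K * e₂ * Ki) * (D₁ K * Ki)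
            - (D₂ K * Ki) * (K * e₁ * Ki) + (D₂ K * Ki) * (D₁ K * Ki)) := by noncomm_ring
      _ = _ := by rw [M1, M2, M3, M4]
  rw [hD₁s, hD₂s, E1, E2, E3, E4, Mbig]
  noncomm_ring

/-- Core equivalence, stated in the convolution ring `CW A`. -/
lemma core {A : Type*} {d : ℕ} (ν : Fin d → A → ℂ) (u : Fin d → ℂ)
    (K Ki : CW A) (hKi : K * Ki = 1) (hiK : Ki * K = 1)
    (v₁ v₂ : Fin d → ℂ) (δ₁ δ₂ δ₃ : CW A) :
    (CW.of (xiOp ν v₁ (K * CW.of (XiOp ν u δ₂) * Ki - CW.of (xiOp ν v₂ K) * Ki))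
      - CW.of (xiOp ν v₂ (K * CW.of (XiOp ν u δ₁) * Ki - CW.of (xiOp ν v₁ K) * Ki))
      + ((K * CW.of (XiOp ν u δ₁) * Ki - CW.of (xiOp ν v₁ K) * Ki)
          * (K * CW.of (XiOp ν u δ₂) * Ki - CW.of (xiOp ν v₂ K) * Ki)
        - (K * CW.of (XiOp ν u δ₂) * Ki - CW.of (xiOp ν v₂ K) * Ki)
          * (K * CW.of (XiOp ν u δ₁) * Ki - CW.of (xiOp ν v₁ K) * Ki))
      = K * CW.of (XiOp ν u δ₃) * Ki)
    ↔ (CW.of (xiOp ν v₁ δ₂) - CW.of (xiOp ν v₂ δ₁) + (δ₁ * δ₂ - δ₂ * δ₁) = δ₃) := by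
  have hKi1 : CW.of (xiOp ν v₁ Ki) = -(Ki * CW.of (xiOp ν v₁ K) * Ki) :=
    d_inv K Ki hKi hiK (fun x => CW.of (xiOp ν v₁ x)) (xi_mul ν v₁) (xi_one ν v₁)
  have hKi2 : CW.of (xiOp ν v₂ Ki) = -(Ki * CW.of (xiOp ν v₂ K) * Ki) :=
    d_inv K Ki hKi hiK (fun x => CW.of (xiOp ν v₂ x)) (xi_mul ν v₂) (xi_one ν v₂)
  have hkey := key (R := CW A) K Ki (CW.of (XiOp ν u δ₁)) (CW.of (XiOp ν u δ₂))
      (CW.of (xiOp ν v₁ (xiOp ν v₂ K)))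
      (fun x => CW.of (xiOp ν v₁ x)) (fun x => CW.of (xiOp ν v₂ x))
      hKi hiK (xi_mul ν v₁) (xi_mul ν v₂) (xi_sub ν v₁) (xi_sub ν v₂) hKi1 hKi2
      rfl (congrArg CW.of (xi_comm ν v₂ v₁ K))
  have hXi : CW.of (XiOp ν u (CW.of (xiOp ν v₁ δ₂) - CW.of (xiOp ν v₂ δ₁)
        + (δ₁ * δ₂ - δ₂ * δ₁)))
      = CW.of (xiOp ν v₁ (CW.of (XiOp ν u δ₂))) - CW.of (xiOp ν v₂ (CW.of (XiOp ν u δ₁)))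
        + (CW.of (XiOp ν u δ₁) * CW.of (XiOp ν u δ₂)
          - CW.of (XiOp ν u δ₂) * CW.of (XiOp ν u δ₁)) := by
    rw [Xi_add, Xi_sub, Xi_sub, Xi_mul, Xi_mul]
    rw [show CW.of (XiOp ν u (CW.of (xiOp ν v₁ δ₂))) = CW.of (xiOp ν v₁ (CW.of (XiOp ν u δ₂)))
          from congrArg CW.of (Xi_xi ν u v₁ δ₂),
        show CW.of (XiOp ν u (CW.of (xiOp ν v₂ δ₁))) = CW.of (xiOp ν v₂ (CW.of (XiOp ν u δ₁)))
          from congrArg CW.of (Xi_xi ν u v₂ δ₁)]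
  have hkey2 : CW.of (xiOp ν v₁ (K * CW.of (XiOp ν u δ₂) * Ki - CW.of (xiOp ν v₂ K) * Ki))
      - CW.of (xiOp ν v₂ (K * CW.of (XiOp ν u δ₁) * Ki - CW.of (xiOp ν v₁ K) * Ki))
      + ((K * CW.of (XiOp ν u δ₁) * Ki - CW.of (xiOp ν v₁ K) * Ki)
          * (K * CW.of (XiOp ν u δ₂) * Ki - CW.of (xiOp ν v₂ K) * Ki)
        - (K * CW.of (XiOp ν u δ₂) * Ki - CW.of (xiOp ν v₂ K) * Ki)
          * (K * CW.of (XiOp ν u δ₁) * Ki - CW.of (xiOp ν v₁ K) * Ki))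
      = K * CW.of (XiOp ν u (CW.of (xiOp ν v₁ δ₂) - CW.of (xiOp ν v₂ δ₁)
          + (δ₁ * δ₂ - δ₂ * δ₁))) * Ki := by
    rw [hXi]; exact hkey
  rw [hkey2]
  have conj_cancel : ∀ z : CW A, Ki * (K * z * Ki) * K = z := by
    intro z
    calc Ki * (K * z * Ki) * K = (Ki * K) * z * (Ki * K) := by noncomm_ring
      _ = z := by rw [hiK]; noncomm_ring
  constructor
  · intro h
    have h3 : CW.of (XiOp ν u (CW.of (xiOp ν v₁ δ₂) - CW.of (xiOp ν v₂ δ₁)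
        + (δ₁ * δ₂ - δ₂ * δ₁))) = CW.of (XiOp ν u δ₃) := by
      rw [← conj_cancel (CW.of (XiOp ν u (CW.of (xiOp ν v₁ δ₂) - CW.of (xiOp ν v₂ δ₁)
        + (δ₁ * δ₂ - δ₂ * δ₁)))), ← conj_cancel (CW.of (XiOp ν u δ₃)), h]
    exact Xi_inj ν u _ _ h3
  · intro h
    rw [h]

/-- invariance of the extended bracket under change of variables.
With `Δ^j = κ★(Ξ_u δ^j)★κ⁻¹ − (ξ_{v^j} κ)★κ⁻¹`, one has
`[(v¹,Δ¹),(v²,Δ²)] = (v³,Δ³)` iff `[(v¹,δ¹),(v²,δ²)] = (v³,δ³)`. -/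
theorem stmt11 {A : Type*} [Countable A] {d : ℕ} (hd : 1 ≤ d) (ν : Fin d → A → ℂ)
    (u : Fin d → ℂ) (κ κinv : List A → ℂ) (hκ : isGrp κ)
    (hκinv₁ : conv κ κinv = unitCW) (hκinv₂ : conv κinv κ = unitCW)
    (v₁ v₂ v₃ : Fin d → ℂ) (δ₁ δ₂ δ₃ : List A → ℂ)
    (hδ₁ : isLie δ₁) (hδ₂ : isLie δ₂) (hδ₃ : isLie δ₃)
    (Δ₁ Δ₂ Δ₃ : List A → ℂ)
    (hΔ₁ : Δ₁ = conv (conv κ (XiOp ν u δ₁)) κinv - conv (xiOp ν v₁ κ) κinv)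
    (hΔ₂ : Δ₂ = conv (conv κ (XiOp ν u δ₂)) κinv - conv (xiOp ν v₂ κ) κinv)
    (hΔ₃ : Δ₃ = conv (conv κ (XiOp ν u δ₃)) κinv - conv (xiOp ν v₃ κ) κinv) :
    brkExt ν (v₁, Δ₁) (v₂, Δ₂) = (v₃, Δ₃) ↔ brkExt ν (v₁, δ₁) (v₂, δ₂) = (v₃, δ₃) := by
  subst hΔ₁ hΔ₂ hΔ₃
  simp only [brkExt, Prod.mk.injEq]
  refine and_congr_right fun h3 => ?_
  subst h3
  rw [xi_zero ν κ, conv_zero_left, sub_zero]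
  exact core ν u κ κinv hκinv₁ hκinv₂ v₁ v₂ δ₁ δ₂ δ₃
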